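/- Let (g,ν) be a positive Sonine pair, i.e. g : (0,∞) → [0,∞) is measurable, ν is a Borel measure on [0,∞) finite on compact subsets of (0,∞), and ∫_{(0,x)} g(x-t) ν(dt) = 1 for all x ∈ (0,1). Then g is locally integrable near 0 (∫₀¹ g(x) dx < ∞) and ν((0,1)) < ∞. -/

import Mathlib

open MeasureTheory Real Set
open scoped ENNReal

section SonineAux

variable {f : ℝ → ℝ≥0∞} {ν : Measure ℝ}

/-- Translation for set lintegrals on ℝ. -/
private lemma sonine_translate (hf : Measurable f) (b p q p' q' : ℝ)
    (h1 : p' = p - b) (h2 : q' = q - b) :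
    ∫⁻ u in Ioo p' q', f (b + u) = ∫⁻ x in Ioo p q, f x := by
  have hpre : (fun u : ℝ => b + u) ⁻¹' Ioo p q = Ioo p' q' := by
    ext u
    simp only [mem_preimage, mem_Ioo, h1, h2]
    constructor <;> intro h <;> constructor <;> linarith [h.1, h.2]
  have := (measurePreserving_add_left (volume : Measure ℝ) b).setLIntegral_comp_preimage
    (measurableSet_Ioo : MeasurableSet (Ioo p q)) hf
  rwa [hpre] at this

/-- Reflection for set lintegrals on ℝ. -/
private lemma sonine_reflect (hf : Measurable f) (c p q p' q' : ℝ)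
    (h1 : p' = c - q) (h2 : q' = c - p) :
    ∫⁻ u in Ioo p' q', f (c - u) = ∫⁻ x in Ioo p q, f x := by
  have hpre : (fun u : ℝ => c - u) ⁻¹' Ioo p q = Ioo p' q' := by
    ext u
    simp only [mem_preimage, mem_Ioo, h1, h2]
    constructor <;> intro h <;> constructor <;> linarith [h.1, h.2]
  have := (Measure.measurePreserving_sub_left (volume : Measure ℝ) c).setLIntegral_comp_preimage
    (measurableSet_Ioo : MeasurableSet (Ioo p q)) hf
  rwa [hpre] at this

private lemma sonine_sigmaFinite
    (hνK : ∀ K : Set ℝ, K ⊆ Set.Ioi 0 → IsCompact K → ν K < ⊤) :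
    SigmaFinite (ν.restrict (Ioo (0:ℝ) 1)) := by
  refine ⟨⟨⟨fun n => Iic (0:ℝ) ∪ Ici (1/(n+2) : ℝ), fun _ => trivial, ?_, ?_⟩⟩⟩
  · intro n
    rw [Measure.restrict_apply' measurableSet_Ioo]
    have hsub : (Iic (0:ℝ) ∪ Ici (1/(n+2):ℝ)) ∩ Ioo 0 1 ⊆ Icc (1/(n+2):ℝ) 1 := by
      rintro x ⟨hx1, hx2⟩
      rcases hx1 with h | h
      · exact absurd hx2.1 (not_lt.mpr h)
      · exact ⟨h, hx2.2.le⟩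
    have hpos : (0:ℝ) < 1/(n+2) := by positivity
    calc ν _ ≤ ν (Icc (1/(n+2):ℝ) 1) := measure_mono hsub
      _ < ⊤ := hνK _ (fun x hx => lt_of_lt_of_le hpos hx.1) isCompact_Icc
  · ext x
    simp only [mem_iUnion, mem_union, mem_Iic, mem_Ici, mem_univ, iff_true]
    rcases le_or_gt x 0 with h | h
    · exact ⟨0, Or.inl h⟩
    · obtain ⟨n, hn⟩ := exists_nat_one_div_lt h
      refine ⟨n, Or.inr ?_⟩
      have h2 : (1:ℝ)/(n+2) ≤ 1/(n+1) := by
        apply one_div_le_one_div_of_le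
        · positivity
        · push_cast; linarith
      linarith

private lemma sonine_W (hf : Measurable f)
    [SigmaFinite (ν.restrict (Ioo (0:ℝ) 1))]
    (hS : ∀ x ∈ Ioo (0:ℝ) 1, ∫⁻ t in Ioo 0 x, f (x - t) ∂ν = 1)
    {c : ℝ} (hc0 : 0 < c) (hc1 : c ≤ 1) :
    ∫⁻ t in Ioo 0 c, (∫⁻ u in Ioo 0 (c - t), f u) ∂ν = ENNReal.ofReal c := by
  set ν1 := ν.restrict (Ioo (0:ℝ) 1) with hν1def
  set F : ℝ → ℝ → ℝ≥0∞ := fun x t => (Ioo (0:ℝ) x).indicator (fun t' => f (x - t')) t with hF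
  have hFm : AEMeasurable (Function.uncurry F) ((volume.restrict (Ioo (0:ℝ) c)).prod ν1) := by
    apply Measurable.aemeasurable
    have hset : MeasurableSet {p : ℝ × ℝ | p.2 ∈ Ioo (0:ℝ) p.1} := by
      have hseteq : {p : ℝ × ℝ | p.2 ∈ Ioo (0:ℝ) p.1}
          = {p : ℝ × ℝ | (0:ℝ) < p.2} ∩ {p : ℝ × ℝ | p.2 < p.1} := by
        ext p; simp [Set.mem_Ioo, Set.mem_setOf_eq, Set.mem_inter_iff]
      rw [hseteq]
      exact (measurableSet_lt measurable_const measurable_snd).inter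
        (measurableSet_lt measurable_snd measurable_fst)
    have huncur : Function.uncurry F
        = ({p : ℝ × ℝ | p.2 ∈ Ioo (0:ℝ) p.1}).indicator (fun p => f (p.1 - p.2)) := by
      ext p
      rcases p with ⟨x, t⟩
      by_cases h : t ∈ Ioo (0:ℝ) x <;>
        simp [Function.uncurry, hF, Set.indicator_apply, h]
    rw [huncur]
    exact (hf.comp (measurable_fst.sub measurable_snd)).indicator hset
  symm
  calc ENNReal.ofReal c
      = ∫⁻ _x in Ioo (0:ℝ) c, (1:ℝ≥0∞) := by
        rw [setLIntegral_one, Real.volume_Ioo, sub_zero]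
    _ = ∫⁻ x in Ioo (0:ℝ) c, ∫⁻ t, F x t ∂ν1 := by
        refine setLIntegral_congr_fun measurableSet_Ioo
          (fun x hx => ?_)
        have hx1 : x ∈ Ioo (0:ℝ) 1 := ⟨hx.1, lt_of_lt_of_le hx.2 hc1⟩
        have hcomp : ∫⁻ t, F x t ∂ν1 = ∫⁻ t in Ioo (0:ℝ) x, f (x - t) ∂ν := by
          simp only [hF]
          rw [lintegral_indicator measurableSet_Ioo, hν1def,
            Measure.restrict_restrict measurableSet_Ioo,
            inter_eq_left.mpr (Ioo_subset_Ioo le_rfl hx1.2.le)]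
        rw [hcomp, hS x hx1]
    _ = ∫⁻ t, (∫⁻ x in Ioo (0:ℝ) c, F x t) ∂ν1 := by
        exact lintegral_lintegral_swap hFm
    _ = ∫⁻ t, (Ioo (0:ℝ) c).indicator (fun t' => ∫⁻ u in Ioo (0:ℝ) (c - t'), f u) t ∂ν1 := by
        apply lintegral_congr_ae
        filter_upwards [ae_restrict_mem (measurableSet_Ioo : MeasurableSet (Ioo (0:ℝ) 1))]
          with t ht
        by_cases htc : t < c
        · have htmem : t ∈ Ioo (0:ℝ) c := ⟨ht.1, htc⟩
          rw [indicator_of_mem htmem]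
          have e1 : ∀ x : ℝ, F x t = (Ioi t).indicator (fun x' => f (x' - t)) x := by
            intro x
            simp only [hF, Set.indicator_apply, mem_Ioo, mem_Ioi, ht.1, true_and]
          calc ∫⁻ x in Ioo (0:ℝ) c, F x t
              = ∫⁻ x in Ioo (0:ℝ) c, (Ioi t).indicator (fun x' => f (x' - t)) x :=
                lintegral_congr fun x => e1 x
            _ = ∫⁻ x in Ioi t ∩ Ioo (0:ℝ) c, f (x - t) := by
                rw [lintegral_indicator measurableSet_Ioi,
                  Measure.restrict_restrict measurableSet_Ioi]
            _ = ∫⁻ x in Ioo t c, f (x - t) := by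
                have hseteq : Ioi t ∩ Ioo (0:ℝ) c = Ioo t c := by
                  ext x
                  simp only [mem_inter_iff, mem_Ioi, mem_Ioo]
                  constructor
                  · rintro ⟨h1, _h2, h3⟩; exact ⟨h1, h3⟩
                  · rintro ⟨h1, h2⟩; exact ⟨h1, ht.1.trans h1, h2⟩
                rw [hseteq]
            _ = ∫⁻ u in Ioo (0:ℝ) (c - t), f u := by
                have htr := sonine_translate (f := fun v => f (v - t))
                  (hf.comp (measurable_id.sub measurable_const)) t t c 0 (c - t)
                  (by ring) rfl
                simp only [add_sub_cancel_left] at htr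
                exact htr.symm

        · push_neg at htc
          rw [indicator_of_notMem
            (fun (hmem : t ∈ Ioo (0:ℝ) c) => absurd hmem.2 (not_lt.mpr htc))]
          refine (setLIntegral_congr_fun measurableSet_Ioo
            (fun x hx => ?_)).trans lintegral_zero
          simp only [hF]
          exact indicator_of_notMem
            (fun (hmem : t ∈ Ioo (0:ℝ) x) => absurd hmem.2 (not_lt.mpr (hx.2.trans_le htc).le)) _
    _ = ∫⁻ t in Ioo (0:ℝ) c, (∫⁻ u in Ioo (0:ℝ) (c - t), f u) ∂ν1 :=
        lintegral_indicator measurableSet_Ioo _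
    _ = ∫⁻ t in Ioo (0:ℝ) c, (∫⁻ u in Ioo (0:ℝ) (c - t), f u) ∂ν := by
        rw [hν1def, Measure.restrict_restrict measurableSet_Ioo,
          inter_eq_left.mpr (Ioo_subset_Ioo le_rfl hc1)]


private lemma sonine_gwin (hf : Measurable f) (hftop : ∀ v, f v ≠ ⊤)
    [SigmaFinite (ν.restrict (Ioo (0:ℝ) 1))]
    (hS : ∀ x ∈ Ioo (0:ℝ) 1, ∫⁻ t in Ioo 0 x, f (x - t) ∂ν = 1)
    {b y : ℝ} (hb : 0 ≤ b) (hy : 0 < y) (hby : b + y ≤ 1) :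
    ∫⁻ u in Ioo b (b + y), f u ≤ ∫⁻ u in Ioo (0:ℝ) y, f u := by
  set ν1 := ν.restrict (Ioo (0:ℝ) 1) with hν1def
  set c := b + y with hc
  have hy1 : y ≤ 1 := by linarith
  set F : ℝ → ℝ → ℝ≥0∞ :=
    fun w t => f (c - w) * (Ioo (0:ℝ) w).indicator (fun t' => f (w - t')) t with hF
  set F2 : ℝ → ℝ → ℝ≥0∞ :=
    fun u t => (Ioo (0:ℝ) (y - t)).indicator (fun u' => f ((c - t) - u') * f u') u with hF2
  have hFmeas : AEMeasurable (Function.uncurry F) ((volume.restrict (Ioo (0:ℝ) y)).prod ν1) := by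
    apply Measurable.aemeasurable
    have hset : MeasurableSet {p : ℝ × ℝ | p.2 ∈ Ioo (0:ℝ) p.1} := by
      have hseteq : {p : ℝ × ℝ | p.2 ∈ Ioo (0:ℝ) p.1}
          = {p : ℝ × ℝ | (0:ℝ) < p.2} ∩ {p : ℝ × ℝ | p.2 < p.1} := by
        ext p; simp [Set.mem_Ioo, Set.mem_setOf_eq, Set.mem_inter_iff]
      rw [hseteq]
      exact (measurableSet_lt measurable_const measurable_snd).inter
        (measurableSet_lt measurable_snd measurable_fst)
    have huncur : Function.uncurry F
        = fun p : ℝ × ℝ => f (c - p.1) *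
            ({q : ℝ × ℝ | q.2 ∈ Ioo (0:ℝ) q.1}).indicator (fun q => f (q.1 - q.2)) p := by
      ext p
      rcases p with ⟨w, t⟩
      by_cases h : t ∈ Ioo (0:ℝ) w <;>
        simp [Function.uncurry, hF, Set.indicator_apply, h]
    rw [huncur]
    exact (hf.comp (measurable_const.sub measurable_fst)).mul
      ((hf.comp (measurable_fst.sub measurable_snd)).indicator hset)
  have hF2meas : AEMeasurable (Function.uncurry F2) ((volume.restrict (Ioo (0:ℝ) y)).prod ν1) := by
    apply Measurable.aemeasurable
    have hset : MeasurableSet {p : ℝ × ℝ | p.1 ∈ Ioo (0:ℝ) (y - p.2)} := by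
      have hseteq : {p : ℝ × ℝ | p.1 ∈ Ioo (0:ℝ) (y - p.2)}
          = {p : ℝ × ℝ | (0:ℝ) < p.1} ∩ {p : ℝ × ℝ | p.1 < y - p.2} := by
        ext p; simp [Set.mem_Ioo, Set.mem_setOf_eq, Set.mem_inter_iff]
      rw [hseteq]
      exact (measurableSet_lt measurable_const measurable_fst).inter
        (measurableSet_lt measurable_fst (measurable_const.sub measurable_snd))
    have huncur : Function.uncurry F2
        = ({p : ℝ × ℝ | p.1 ∈ Ioo (0:ℝ) (y - p.2)}).indicator
            (fun p => f ((c - p.2) - p.1) * f p.1) := by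
      ext p
      rcases p with ⟨u, t⟩
      by_cases h : u ∈ Ioo (0:ℝ) (y - t) <;>
        simp [Function.uncurry, hF2, Set.indicator_apply, h]
    rw [huncur]
    exact ((hf.comp ((measurable_const.sub measurable_snd).sub measurable_fst)).mul
      (hf.comp measurable_fst)).indicator hset
  calc ∫⁻ u in Ioo b c, f u
      = ∫⁻ w in Ioo (0:ℝ) y, f (c - w) :=
        (sonine_reflect hf c b c 0 y (by rw [hc]; ring) (by rw [hc]; ring)).symm
    _ = ∫⁻ w in Ioo (0:ℝ) y, (∫⁻ t, F w t ∂ν1) := by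
        refine setLIntegral_congr_fun measurableSet_Ioo
          (fun w hw => ?_)
        have hw1 : w ∈ Ioo (0:ℝ) 1 := ⟨hw.1, lt_of_lt_of_le hw.2 hy1⟩
        have hSw : ∫⁻ t, (Ioo (0:ℝ) w).indicator (fun t' => f (w - t')) t ∂ν1 = 1 := by
          rw [lintegral_indicator measurableSet_Ioo, hν1def,
            Measure.restrict_restrict measurableSet_Ioo,
            inter_eq_left.mpr (Ioo_subset_Ioo le_rfl hw1.2.le)]
          exact hS w hw1
        simp only [hF]
        rw [lintegral_const_mul' _ _ (hftop (c - w)), hSw, mul_one]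
    _ = ∫⁻ t, (∫⁻ w in Ioo (0:ℝ) y, F w t) ∂ν1 := lintegral_lintegral_swap hFmeas
    _ = ∫⁻ t, (∫⁻ u in Ioo (0:ℝ) y, F2 u t) ∂ν1 := by
        apply lintegral_congr_ae
        filter_upwards [ae_restrict_mem (measurableSet_Ioo : MeasurableSet (Ioo (0:ℝ) 1))]
          with t ht
        by_cases hty : t < y
        · have e1 : ∀ w : ℝ, F w t = (Ioi t).indicator (fun w' => f (c - w') * f (w' - t)) w := by
            intro w
            simp only [hF, Set.indicator_apply, mem_Ioo, mem_Ioi, ht.1, true_and,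
              mul_ite, mul_zero]
          have hseteq1 : Ioi t ∩ Ioo (0:ℝ) y = Ioo t y := by
            ext w
            simp only [mem_inter_iff, mem_Ioi, mem_Ioo]
            constructor
            · rintro ⟨h1, _h2, h3⟩; exact ⟨h1, h3⟩
            · rintro ⟨h1, h2⟩; exact ⟨h1, ht.1.trans h1, h2⟩
          have left1 : ∫⁻ w in Ioo (0:ℝ) y, F w t = ∫⁻ w in Ioo t y, f (c - w) * f (w - t) := by
            rw [lintegral_congr e1, lintegral_indicator measurableSet_Ioi,
              Measure.restrict_restrict measurableSet_Ioi, hseteq1]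
          have htr := sonine_translate (f := fun v => f (c - v) * f (v - t))
            ((hf.comp (measurable_const.sub measurable_id)).mul
              (hf.comp (measurable_id.sub measurable_const))) t t y 0 (y - t)
            (by ring) rfl
          have left2 : ∫⁻ w in Ioo t y, f (c - w) * f (w - t)
              = ∫⁻ u in Ioo (0:ℝ) (y - t), f ((c - t) - u) * f u := by
            rw [← htr]
            refine lintegral_congr fun u => ?_
            show f (c - (t + u)) * f ((t + u) - t) = f ((c - t) - u) * f u
            rw [show c - (t + u) = (c - t) - u by ring, add_sub_cancel_left]
          have right1 : ∫⁻ u in Ioo (0:ℝ) y, F2 u t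
              = ∫⁻ u in Ioo (0:ℝ) (y - t), f ((c - t) - u) * f u := by
            simp only [hF2]
            rw [lintegral_indicator measurableSet_Ioo,
              Measure.restrict_restrict measurableSet_Ioo,
              inter_eq_left.mpr (Ioo_subset_Ioo le_rfl (by linarith [ht.1] : y - t ≤ y))]
          rw [left1, left2, right1]
        · push_neg at hty
          have lzero : ∫⁻ w in Ioo (0:ℝ) y, F w t = 0 := by
            refine (setLIntegral_congr_fun measurableSet_Ioo
              (fun w hw => ?_)).trans lintegral_zero
            simp only [hF]
            rw [indicator_of_notMem
              (fun (hmem : t ∈ Ioo (0:ℝ) w) =>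
                absurd hmem.2 (not_lt.mpr (hw.2.trans_le hty).le)) _, mul_zero]
          have rzero : ∫⁻ u in Ioo (0:ℝ) y, F2 u t = 0 := by
            refine (setLIntegral_congr_fun measurableSet_Ioo
              (fun u hu => ?_)).trans lintegral_zero
            simp only [hF2]
            exact indicator_of_notMem
              (fun (hmem : u ∈ Ioo (0:ℝ) (y - t)) =>
                absurd (hmem.1.trans hmem.2) (not_lt.mpr (by linarith))) _
          rw [lzero, rzero]
    _ = ∫⁻ u in Ioo (0:ℝ) y, (∫⁻ t, F2 u t ∂ν1) := (lintegral_lintegral_swap hF2meas).symm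
    _ ≤ ∫⁻ u in Ioo (0:ℝ) y, f u := by
        apply lintegral_mono_ae
        filter_upwards [ae_restrict_mem (measurableSet_Ioo : MeasurableSet (Ioo (0:ℝ) y))]
          with u hu
        have e2 : ∀ t : ℝ, F2 u t = (Iio (y - u)).indicator (fun t' => f ((c - u) - t') * f u) t := by
          intro t
          simp only [hF2, Set.indicator_apply, mem_Ioo, mem_Iio, hu.1, true_and]
          rw [show (c - t) - u = (c - u) - t by ring]
          exact if_congr (by constructor <;> intro h <;> linarith) rfl rfl
        have hseteq2 : Iio (y - u) ∩ Ioo (0:ℝ) 1 = Ioo (0:ℝ) (y - u) := by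
          ext s
          simp only [mem_inter_iff, mem_Iio, mem_Ioo]
          constructor
          · rintro ⟨h1, h2, _h3⟩; exact ⟨h2, h1⟩
          · rintro ⟨h1, h2⟩
            refine ⟨h2, h1, ?_⟩
            have : y - u < 1 := by linarith [hu.1]
            linarith
        calc ∫⁻ t, F2 u t ∂ν1
            = ∫⁻ t in Iio (y - u), f ((c - u) - t) * f u ∂ν1 := by
              rw [lintegral_congr e2, lintegral_indicator measurableSet_Iio]
          _ = ∫⁻ t in Ioo (0:ℝ) (y - u), f ((c - u) - t) * f u ∂ν := by
              rw [hν1def, Measure.restrict_restrict measurableSet_Iio, hseteq2]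
          _ ≤ ∫⁻ t in Ioo (0:ℝ) (c - u), f ((c - u) - t) * f u ∂ν :=
              lintegral_mono' (Measure.restrict_mono
                (Ioo_subset_Ioo le_rfl (by rw [hc]; linarith)) le_rfl) le_rfl
          _ = (∫⁻ t in Ioo (0:ℝ) (c - u), f ((c - u) - t) ∂ν) * f u :=
              lintegral_mul_const' _ _ (hftop u)
          _ = 1 * f u := by
              rw [hS (c - u) ⟨by rw [hc]; linarith [hu.2], by rw [hc]; linarith [hu.1]⟩]
          _ = f u := one_mul _

private lemma sonine_nwin (hf : Measurable f)
    [SigmaFinite (ν.restrict (Ioo (0:ℝ) 1))]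
    (hνK : ∀ K : Set ℝ, K ⊆ Set.Ioi 0 → IsCompact K → ν K < ⊤)
    (hS : ∀ x ∈ Ioo (0:ℝ) 1, ∫⁻ t in Ioo 0 x, f (x - t) ∂ν = 1)
    {b y : ℝ} (hb : 0 < b) (hy : 0 < y) (hby : b + y ≤ 1) :
    ν (Ioo b (b + y)) ≤ ν (Ioo (0:ℝ) y) := by
  set ν1 := ν.restrict (Ioo (0:ℝ) 1) with hν1def
  set c := b + y with hc
  have hy1 : y < 1 := by linarith
  set νb := ν.restrict (Ioo b c) with hνbdef
  haveI : IsFiniteMeasure νb := by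
    constructor
    rw [hνbdef, Measure.restrict_apply_univ]
    calc ν (Ioo b c) ≤ ν (Icc b c) := measure_mono Ioo_subset_Icc_self
      _ < ⊤ := hνK _ (fun x hx => lt_of_lt_of_le hb hx.1) isCompact_Icc
  set Fn : ℝ → ℝ → ℝ≥0∞ :=
    fun τ t => (Ioo (0:ℝ) (c - τ)).indicator (fun t' => f ((c - τ) - t')) t with hFn
  have hFnm : AEMeasurable (Function.uncurry Fn) (νb.prod ν1) := by
    apply Measurable.aemeasurable
    have hset : MeasurableSet {p : ℝ × ℝ | p.2 ∈ Ioo (0:ℝ) (c - p.1)} := by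
      have hseteq : {p : ℝ × ℝ | p.2 ∈ Ioo (0:ℝ) (c - p.1)}
          = {p : ℝ × ℝ | (0:ℝ) < p.2} ∩ {p : ℝ × ℝ | p.2 < c - p.1} := by
        ext p; simp [Set.mem_Ioo, Set.mem_setOf_eq, Set.mem_inter_iff]
      rw [hseteq]
      exact (measurableSet_lt measurable_const measurable_snd).inter
        (measurableSet_lt measurable_snd (measurable_const.sub measurable_fst))
    have huncur : Function.uncurry Fn
        = ({p : ℝ × ℝ | p.2 ∈ Ioo (0:ℝ) (c - p.1)}).indicator
            (fun p => f ((c - p.1) - p.2)) := by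
      ext p
      rcases p with ⟨τ, t⟩
      by_cases h : t ∈ Ioo (0:ℝ) (c - τ) <;>
        simp [Function.uncurry, hFn, Set.indicator_apply, h]
    rw [huncur]
    exact (hf.comp ((measurable_const.sub measurable_fst).sub measurable_snd)).indicator hset
  calc ν (Ioo b c)
      = ∫⁻ τ in Ioo b c, (1:ℝ≥0∞) ∂ν := (setLIntegral_one _).symm
    _ = ∫⁻ τ, (∫⁻ t, Fn τ t ∂ν1) ∂νb := by
        apply lintegral_congr_ae
        filter_upwards [ae_restrict_mem (measurableSet_Ioo : MeasurableSet (Ioo b c))]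
          with τ hτ
        have hx1 : c - τ ∈ Ioo (0:ℝ) 1 := by
          constructor
          · linarith [hτ.2]
          · have : b ≤ τ := hτ.1.le
            have : 0 < b := hb
            linarith [hτ.1]
        symm
        simp only [hFn]
        rw [lintegral_indicator measurableSet_Ioo, hν1def,
          Measure.restrict_restrict measurableSet_Ioo,
          inter_eq_left.mpr (Ioo_subset_Ioo le_rfl hx1.2.le)]
        exact hS _ hx1
    _ = ∫⁻ t, (∫⁻ τ, Fn τ t ∂νb) ∂ν1 := lintegral_lintegral_swap hFnm
    _ ≤ ∫⁻ t, (Ioo (0:ℝ) y).indicator (fun _ => (1:ℝ≥0∞)) t ∂ν1 := by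
        apply lintegral_mono_ae
        filter_upwards [ae_restrict_mem (measurableSet_Ioo : MeasurableSet (Ioo (0:ℝ) 1))]
          with t ht
        have e3 : ∀ τ : ℝ, Fn τ t = (Iio (c - t)).indicator (fun τ' => f ((c - t) - τ')) τ := by
          intro τ
          simp only [hFn, Set.indicator_apply, mem_Ioo, mem_Iio, ht.1, true_and]
          rw [show (c - τ) - t = (c - t) - τ by ring]
          exact if_congr (by constructor <;> intro h <;> linarith) rfl rfl
        have base : ∫⁻ τ, Fn τ t ∂νb = ∫⁻ τ in Iio (c - t) ∩ Ioo b c, f ((c - t) - τ) ∂ν := by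
          rw [lintegral_congr e3, lintegral_indicator measurableSet_Iio, hνbdef,
            Measure.restrict_restrict measurableSet_Iio]
        by_cases hty : t < y
        · rw [indicator_of_mem (mem_Ioo.mpr ⟨ht.1, hty⟩ : t ∈ Ioo (0:ℝ) y)]
          have hseteq3 : Iio (c - t) ∩ Ioo b c = Ioo b (c - t) := by
            ext τ
            simp only [mem_inter_iff, mem_Iio, mem_Ioo]
            constructor
            · rintro ⟨h1, h2, _h3⟩; exact ⟨h2, h1⟩
            · rintro ⟨h1, h2⟩
              refine ⟨h2, h1, ?_⟩
              have : 0 < t := ht.1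
              linarith
          rw [base, hseteq3]
          calc ∫⁻ τ in Ioo b (c - t), f ((c - t) - τ) ∂ν
              ≤ ∫⁻ τ in Ioo (0:ℝ) (c - t), f ((c - t) - τ) ∂ν :=
                lintegral_mono' (Measure.restrict_mono
                  (Ioo_subset_Ioo hb.le le_rfl) le_rfl) le_rfl
            _ = 1 := hS (c - t) ⟨by rw [hc]; linarith, by rw [hc]; linarith [ht.1]⟩
        · push_neg at hty
          rw [indicator_of_notMem
            (fun (hmem : t ∈ Ioo (0:ℝ) y) => absurd hmem.2 (not_lt.mpr hty)) _]
          rw [base]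
          have hempty : Iio (c - t) ∩ Ioo b c = ∅ := by
            ext τ
            simp only [mem_inter_iff, mem_Iio, mem_Ioo, mem_empty_iff_false, iff_false]
            rintro ⟨h1, h2, _h3⟩
            have : c - t ≤ b := by rw [hc]; linarith
            linarith
          rw [hempty, Measure.restrict_empty, lintegral_zero_measure]
    _ = ν1 (Ioo (0:ℝ) y) := by
        rw [lintegral_indicator measurableSet_Ioo, setLIntegral_one]
    _ = ν (Ioo (0:ℝ) y) := by
        rw [hν1def, Measure.restrict_apply measurableSet_Ioo,
          inter_eq_left.mpr (Ioo_subset_Ioo le_rfl hy1.le)]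

end SonineAux

/-- If `(g,ν)` is a positive Sonine pair (`g : (0,∞) → [0,∞)` measurable, `ν` a Borel
measure on `[0,∞)` finite on compact subsets of `(0,∞)`, and `∫_{(0,x)} g(x-t) ν(dt) = 1`
for all `x ∈ (0,1)`), then `∫₀¹ g < ∞` and `ν((0,1)) < ∞`. -/
theorem sonine_pair_local_integrability
    (g : ℝ → ℝ) (hg : Measurable g) (hg0 : ∀ x > (0:ℝ), 0 ≤ g x)
    (ν : Measure ℝ) (hν0 : ν (Set.Iio 0) = 0)
    (hνK : ∀ K : Set ℝ, K ⊆ Set.Ioi 0 → IsCompact K → ν K < ⊤)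
    (hSonine : ∀ x ∈ Set.Ioo (0:ℝ) 1,
      (∫⁻ t in Set.Ioo (0:ℝ) x, ENNReal.ofReal (g (x - t)) ∂ν) = 1) :
    (∫⁻ x in Set.Ioo (0:ℝ) 1, ENNReal.ofReal (g x)) < ⊤ ∧
      ν (Set.Ioo (0:ℝ) 1) < ⊤ := by
  have hf : Measurable (fun v => ENNReal.ofReal (g v)) := ENNReal.measurable_ofReal.comp hg
  have hftop : ∀ v : ℝ, (fun v => ENNReal.ofReal (g v)) v ≠ ⊤ := fun v => ENNReal.ofReal_ne_top
  haveI : SigmaFinite (ν.restrict (Ioo (0:ℝ) 1)) := sonine_sigmaFinite hνK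
  have hS : ∀ x ∈ Ioo (0:ℝ) 1,
      ∫⁻ t in Ioo 0 x, (fun v => ENNReal.ofReal (g v)) (x - t) ∂ν = 1 := hSonine
  -- seed: positivity of ν near 0
  have hN8 : ν (Ioo (0:ℝ) (1/8)) ≠ 0 := by
    intro h0
    have h1 := hS (1/8) (by norm_num)
    rw [Measure.restrict_eq_zero.mpr h0, lintegral_zero_measure] at h1
    exact zero_ne_one h1
  have hN4ne : ν (Ioo (0:ℝ) (1/4)) ≠ 0 := fun h0 =>
    hN8 (measure_mono_null (Ioo_subset_Ioo le_rfl (by norm_num)) h0)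
  have hW4 := sonine_W (f := fun v => ENNReal.ofReal (g v)) hf hS
    (c := 1/4) (by norm_num) (by norm_num)
  have hW2 := sonine_W (f := fun v => ENNReal.ofReal (g v)) hf hS
    (c := 1/2) (by norm_num) (by norm_num)
  set G4 : ℝ≥0∞ := ∫⁻ u in Ioo (0:ℝ) (1/4), ENNReal.ofReal (g u) with hG4def
  -- G4 ≠ 0
  have hG4ne : G4 ≠ 0 := by
    intro h0
    have hzero : ENNReal.ofReal ((1:ℝ)/4) = 0 := by
      rw [← hW4]
      refine le_antisymm ?_ zero_le
      have hb : ∀ t : ℝ, t ∈ Ioo (0:ℝ) (1/4) →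
          (∫⁻ u in Ioo (0:ℝ) (1/4 - t), ENNReal.ofReal (g u)) ≤ 0 := by
        intro t ht
        have hmono : (∫⁻ u in Ioo (0:ℝ) (1/4 - t), ENNReal.ofReal (g u)) ≤ G4 := by
          rw [hG4def]
          exact lintegral_mono' (Measure.restrict_mono
            (Ioo_subset_Ioo le_rfl (by linarith [ht.1])) le_rfl) le_rfl
        rw [h0] at hmono
        exact hmono
      calc ∫⁻ t in Ioo (0:ℝ) (1/4), (∫⁻ u in Ioo (0:ℝ) (1/4 - t), ENNReal.ofReal (g u)) ∂ν
          ≤ ∫⁻ _t in Ioo (0:ℝ) (1/4), (0:ℝ≥0∞) ∂ν := by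
            apply lintegral_mono_ae
            filter_upwards [ae_restrict_mem measurableSet_Ioo] with t ht
            exact hb t ht
        _ = 0 := by simp
    rw [ENNReal.ofReal_eq_zero] at hzero
    norm_num at hzero
  -- product bound
  have hprod : G4 * ν (Ioo (0:ℝ) (1/4)) ≤ ENNReal.ofReal ((1:ℝ)/2) := by
    rw [← hW2]
    calc G4 * ν (Ioo (0:ℝ) (1/4))
        = ∫⁻ _t in Ioo (0:ℝ) (1/4), G4 ∂ν := (setLIntegral_const _ _).symm
      _ ≤ ∫⁻ t in Ioo (0:ℝ) (1/4), (∫⁻ u in Ioo (0:ℝ) (1/2 - t), ENNReal.ofReal (g u)) ∂ν := by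
          apply lintegral_mono_ae
          filter_upwards [ae_restrict_mem measurableSet_Ioo] with t ht
          rw [hG4def]
          exact lintegral_mono' (Measure.restrict_mono
            (Ioo_subset_Ioo le_rfl (by linarith [ht.2])) le_rfl) le_rfl
      _ ≤ ∫⁻ t in Ioo (0:ℝ) (1/2), (∫⁻ u in Ioo (0:ℝ) (1/2 - t), ENNReal.ofReal (g u)) ∂ν :=
          lintegral_mono' (Measure.restrict_mono
            (Ioo_subset_Ioo le_rfl (by norm_num)) le_rfl) le_rfl
  have hG4top : G4 ≠ ⊤ := by
    intro htop
    rw [htop, ENNReal.top_mul hN4ne] at hprod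
    exact ENNReal.ofReal_ne_top (top_le_iff.mp hprod)
  have hN4top : ν (Ioo (0:ℝ) (1/4)) ≠ ⊤ := by
    intro htop
    rw [htop, ENNReal.mul_top hG4ne] at hprod
    exact ENNReal.ofReal_ne_top (top_le_iff.mp hprod)
  -- covering of (0,1) by seven windows of length 1/4
  have cover : Ioo (0:ℝ) 1 ⊆
      Ioo (0:ℝ) (1/4) ∪ (Ioo (1/8 : ℝ) (1/8 + 1/4) ∪ (Ioo (2/8 : ℝ) (2/8 + 1/4) ∪
        (Ioo (3/8 : ℝ) (3/8 + 1/4) ∪ (Ioo (4/8 : ℝ) (4/8 + 1/4) ∪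
          (Ioo (5/8 : ℝ) (5/8 + 1/4) ∪ Ioo (6/8 : ℝ) (6/8 + 1/4)))))) := by
    intro x hx
    obtain ⟨hx0, hx1⟩ := hx
    rcases lt_or_ge x (1/4) with h1 | h1
    · exact Or.inl ⟨hx0, h1⟩
    rcases lt_or_ge x (3/8) with h2 | h2
    · exact Or.inr (Or.inl ⟨by linarith, by linarith⟩)
    rcases lt_or_ge x (1/2) with h3 | h3
    · exact Or.inr (Or.inr (Or.inl ⟨by linarith, by linarith⟩))
    rcases lt_or_ge x (5/8) with h4 | h4
    · exact Or.inr (Or.inr (Or.inr (Or.inl ⟨by linarith, by linarith⟩)))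
    rcases lt_or_ge x (3/4) with h5 | h5
    · exact Or.inr (Or.inr (Or.inr (Or.inr (Or.inl ⟨by linarith, by linarith⟩))))
    rcases lt_or_ge x (7/8) with h6 | h6
    · exact Or.inr (Or.inr (Or.inr (Or.inr (Or.inr (Or.inl ⟨by linarith, by linarith⟩)))))
    · exact Or.inr (Or.inr (Or.inr (Or.inr (Or.inr (Or.inr ⟨by linarith, by linarith⟩)))))
  -- window bounds
  have hw1 := sonine_gwin (f := fun v => ENNReal.ofReal (g v)) hf hftop hS
    (b := 1/8) (y := 1/4) (by norm_num) (by norm_num) (by norm_num)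
  have hw2 := sonine_gwin (f := fun v => ENNReal.ofReal (g v)) hf hftop hS
    (b := 2/8) (y := 1/4) (by norm_num) (by norm_num) (by norm_num)
  have hw3 := sonine_gwin (f := fun v => ENNReal.ofReal (g v)) hf hftop hS
    (b := 3/8) (y := 1/4) (by norm_num) (by norm_num) (by norm_num)
  have hw4 := sonine_gwin (f := fun v => ENNReal.ofReal (g v)) hf hftop hS
    (b := 4/8) (y := 1/4) (by norm_num) (by norm_num) (by norm_num)
  have hw5 := sonine_gwin (f := fun v => ENNReal.ofReal (g v)) hf hftop hS
    (b := 5/8) (y := 1/4) (by norm_num) (by norm_num) (by norm_num)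
  have hw6 := sonine_gwin (f := fun v => ENNReal.ofReal (g v)) hf hftop hS
    (b := 6/8) (y := 1/4) (by norm_num) (by norm_num) (by norm_num)
  have hn1 := sonine_nwin (f := fun v => ENNReal.ofReal (g v)) hf hνK hS
    (b := 1/8) (y := 1/4) (by norm_num) (by norm_num) (by norm_num)
  have hn2 := sonine_nwin (f := fun v => ENNReal.ofReal (g v)) hf hνK hS
    (b := 2/8) (y := 1/4) (by norm_num) (by norm_num) (by norm_num)
  have hn3 := sonine_nwin (f := fun v => ENNReal.ofReal (g v)) hf hνK hS
    (b := 3/8) (y := 1/4) (by norm_num) (by norm_num) (by norm_num)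
  have hn4 := sonine_nwin (f := fun v => ENNReal.ofReal (g v)) hf hνK hS
    (b := 4/8) (y := 1/4) (by norm_num) (by norm_num) (by norm_num)
  have hn5 := sonine_nwin (f := fun v => ENNReal.ofReal (g v)) hf hνK hS
    (b := 5/8) (y := 1/4) (by norm_num) (by norm_num) (by norm_num)
  have hn6 := sonine_nwin (f := fun v => ENNReal.ofReal (g v)) hf hνK hS
    (b := 6/8) (y := 1/4) (by norm_num) (by norm_num) (by norm_num)
  have hG4lt : G4 < ⊤ := lt_top_iff_ne_top.mpr hG4top
  have hN4lt : ν (Ioo (0:ℝ) (1/4)) < ⊤ := lt_top_iff_ne_top.mpr hN4top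
  constructor
  · -- g-part
    have hsum : (∫⁻ x in Ioo (0:ℝ) 1, ENNReal.ofReal (g x))
        ≤ G4 + (G4 + (G4 + (G4 + (G4 + (G4 + G4))))) := by
      refine le_trans (lintegral_mono_set cover) ?_
      refine le_trans (lintegral_union_le _ _ _) (add_le_add le_rfl ?_)
      refine le_trans (lintegral_union_le _ _ _) (add_le_add hw1 ?_)
      refine le_trans (lintegral_union_le _ _ _) (add_le_add hw2 ?_)
      refine le_trans (lintegral_union_le _ _ _) (add_le_add hw3 ?_)
      refine le_trans (lintegral_union_le _ _ _) (add_le_add hw4 ?_)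
      refine le_trans (lintegral_union_le _ _ _) (add_le_add hw5 hw6)
    refine lt_of_le_of_lt hsum ?_
    simp only [ENNReal.add_lt_top]
    exact ⟨hG4lt, hG4lt, hG4lt, hG4lt, hG4lt, hG4lt, hG4lt⟩
  · -- ν-part
    have hsum : ν (Ioo (0:ℝ) 1)
        ≤ ν (Ioo (0:ℝ) (1/4)) + (ν (Ioo (0:ℝ) (1/4)) + (ν (Ioo (0:ℝ) (1/4)) +
          (ν (Ioo (0:ℝ) (1/4)) + (ν (Ioo (0:ℝ) (1/4)) + (ν (Ioo (0:ℝ) (1/4)) +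
            ν (Ioo (0:ℝ) (1/4))))))) := by
      refine le_trans (measure_mono cover) ?_
      refine le_trans (measure_union_le _ _) (add_le_add le_rfl ?_)
      refine le_trans (measure_union_le _ _) (add_le_add hn1 ?_)
      refine le_trans (measure_union_le _ _) (add_le_add hn2 ?_)
      refine le_trans (measure_union_le _ _) (add_le_add hn3 ?_)
      refine le_trans (measure_union_le _ _) (add_le_add hn4 ?_)
      refine le_trans (measure_union_le _ _) (add_le_add hn5 hn6)
    refine lt_of_le_of_lt hsum ?_
    simp only [ENNReal.add_lt_top]
    exact ⟨hN4lt, hN4lt, hN4lt, hN4lt, hN4lt, hN4lt, hN4lt⟩
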